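/- Let (ρ*, F*) ∈ 𝒞_{N,𝒯} minimize B_{N,𝒯} over 𝒞_{N,𝒯} with finite value, let μ > 0, and let (ρ^μ, F^μ) ∈ 𝒞_{N,𝒯} minimize B_{N,𝒯} + μ J_{N,𝒯} over 𝒞_{N,𝒯} with finite value. Then 0 ≤ B_{N,𝒯}(ρ^μ, F^μ) − B_{N,𝒯}(ρ*, F*) ≤ μ (N/(N+1)) |Ω|, where |Ω| = Σ_{K'∈𝒯'} m_{K'}. -/

import Mathlib

open scoped BigOperators ENNReal RealInnerProductSpace
open Finset

namespace OTFV

/-- The Benamou–Brenier action density for a scalar flux value. -/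
noncomputable def Bact (p q : ℝ) : ℝ≥0∞ :=
  if 0 < p then ENNReal.ofReal (q ^ 2 / (2 * p))
  else if p = 0 ∧ q = 0 then 0 else ⊤

/-- Combinatorial/metric data of an admissible TPFA mesh: cells `T`, internal
edges `E`; an edge `σ` joins the two distinct cells `e1 σ` and `e2 σ`. -/
structure Mesh (T E : Type*) where
  e1 : E → T
  e2 : E → T
  ne : ∀ σ, e1 σ ≠ e2 σ
  m : T → ℝ
  m_pos : ∀ K, 0 < m K
  mS : E → ℝ
  mS_pos : ∀ σ, 0 < mS σ
  dS : E → ℝ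
  dS_pos : ∀ σ, 0 < dS σ
  d1 : E → ℝ   -- d_{K,σ} for K = e1 σ
  d2 : E → ℝ   -- d_{L,σ} for L = e2 σ
  d1_pos : ∀ σ, 0 < d1 σ
  d2_pos : ∀ σ, 0 < d2 σ
  d_sum : ∀ σ, d1 σ + d2 σ = dS σ

variable {T T' E : Type*}

/-- A conservative flux is encoded by its value `F σ = F_{K,σ}` on the side `K = e1 σ`
(so that `F_{L,σ} = -F σ` for `L = e2 σ`).  Discrete divergence. -/
noncomputable def divT [Fintype E] [DecidableEq T] (M : Mesh T E) (F : E → ℝ) (K : T) : ℝ :=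
  (∑ σ, ((if M.e1 σ = K then F σ else 0) + (if M.e2 σ = K then -F σ else 0)) * M.mS σ) / M.m K

/-- Discrete gradient, oriented from `e1 σ` to `e2 σ` (the `(K,σ)` component, `K = e1 σ`). -/
noncomputable def gradS (M : Mesh T E) (a : T → ℝ) (σ : E) : ℝ :=
  (a (M.e2 σ) - a (M.e1 σ)) / M.dS σ

/-- Linear (weighted arithmetic mean) reconstruction on edges. -/
noncomputable def linRec (M : Mesh T E) (a : T → ℝ) (σ : E) : ℝ :=
  (M.d1 σ / M.dS σ) * a (M.e1 σ) + (M.d2 σ / M.dS σ) * a (M.e2 σ)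

/-- Injection from coarse densities to fine densities, `p` maps a fine cell to its coarse cell. -/
def inj (p : T → T') (ρ : T' → ℝ) : T → ℝ := fun K => ρ (p K)

/-- Mass of a coarse cell. -/
noncomputable def coarseM [Fintype T] [DecidableEq T'] (M : Mesh T E) (p : T → T') (K' : T') : ℝ :=
  ∑ K ∈ Finset.univ.filter (fun K => p K = K'), M.m K

/-- Adjoint of the injection. -/
noncomputable def injAdj [Fintype T] [DecidableEq T'] (M : Mesh T E) (p : T → T')
    (a : T → ℝ) (K' : T') : ℝ :=
  (∑ K ∈ Finset.univ.filter (fun K => p K = K'), a K * M.m K) / coarseM M p K'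

/-- Adjoint of the linear reconstruction, `(L_Σ^* u)_K = Σ_{σ∈Σ_K} u_σ m_σ d_{K,σ}/m_K`. -/
noncomputable def linRecAdj [Fintype E] [DecidableEq T] (M : Mesh T E) (u : E → ℝ) (K : T) : ℝ :=
  (∑ σ, ((if M.e1 σ = K then u σ * M.mS σ * M.d1 σ else 0) +
          (if M.e2 σ = K then u σ * M.mS σ * M.d2 σ else 0))) / M.m K

/-- `R_{𝒯'} = 𝕀^* ∘ L_Σ^*`. -/
noncomputable def coarseRec [Fintype T] [Fintype E] [DecidableEq T] [DecidableEq T']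
    (M : Mesh T E) (p : T → T') (u : E → ℝ) (K' : T') : ℝ :=
  injAdj M p (linRecAdj M u) K'

/-- Weighted scalar product on the coarse space. -/
noncomputable def iprodC [Fintype T] [Fintype T'] [DecidableEq T'] (M : Mesh T E) (p : T → T')
    (a b : T' → ℝ) : ℝ :=
  ∑ K', a K' * b K' * coarseM M p K'

/-- The discrete Benamou–Brenier functional `B_{N,𝒯}`; the time step is `τ = 1/(N+1)`,
`ρ k.succ` stands for `ρ^k` and `ρ k.castSucc` for `ρ^{k-1}`, `k = 1, …, N+1`. -/
noncomputable def Benergy [Fintype E] [Fintype T'] (M : Mesh T E) (p : T → T') (N : ℕ)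
    (ρ : Fin (N+2) → T' → ℝ) (F : Fin (N+1) → E → ℝ) : ℝ≥0∞ :=
  if ∀ k K', 0 ≤ ρ k K' then
    ∑ k : Fin (N+1),
      ENNReal.ofReal ((1:ℝ)/(N+1)) *
        ∑ σ, Bact (linRec M (inj p (fun K' => (ρ k.succ K' + ρ k.castSucc K') / 2)) σ) (F k σ) *
          ENNReal.ofReal (M.mS σ * M.dS σ)
  else ⊤

/-- The discrete continuity equation. -/
def ContEq [Fintype E] [DecidableEq T] (M : Mesh T E) (p : T → T') (N : ℕ)
    (ρ : Fin (N+2) → T' → ℝ) (F : Fin (N+1) → E → ℝ) : Prop :=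
  ∀ (k : Fin (N+1)) (K : T),
    (ρ k.succ (p K) - ρ k.castSucc (p K)) / ((1:ℝ)/(N+1)) + divT M (F k) K = 0

/-- The constraint set `𝒞_{N,𝒯}`. -/
def Cset [Fintype E] [DecidableEq T] (M : Mesh T E) (p : T → T') (N : ℕ)
    (ρin ρf : T' → ℝ) : Set ((Fin (N+2) → T' → ℝ) × (Fin (N+1) → E → ℝ)) :=
  {x | x.1 0 = ρin ∧ x.1 (Fin.last (N+1)) = ρf ∧ ContEq M p N x.1 x.2}

/-- The (halved, squared) discrete Wasserstein distance: `W² = 2 inf B`. -/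
noncomputable def Wdist2 [Fintype E] [Fintype T'] [DecidableEq T] (M : Mesh T E) (p : T → T')
    (N : ℕ) (ρin ρf : T' → ℝ) : ℝ≥0∞ :=
  2 * ⨅ (x : (Fin (N+2) → T' → ℝ) × (Fin (N+1) → E → ℝ)) (_ : x ∈ Cset M p N ρin ρf),
    Benergy M p N x.1 x.2

/-- Logarithmic barrier. -/
noncomputable def Jlog (x : ℝ) : EReal := if 0 < x then ((- Real.log x : ℝ) : EReal) else ⊤

/-- The barrier functional `J_{N,𝒯}` (only the interior times `k = 1, …, N`). -/
noncomputable def Jbar [Fintype T] [Fintype T'] [DecidableEq T'] (M : Mesh T E) (p : T → T')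
    (N : ℕ) (ρ : Fin (N+2) → T' → ℝ) : EReal :=
  ∑ k : Fin N, (((1:ℝ)/(N+1) : ℝ) : EReal) *
    ∑ K', Jlog (ρ (k.succ.castSucc) K') * ((coarseM M p K' : ℝ) : EReal)

/-- Perturbed objective `B_{N,𝒯} + μ J_{N,𝒯}`, with values in `EReal`. -/
noncomputable def Pobj [Fintype T] [Fintype T'] [Fintype E] [DecidableEq T'] (M : Mesh T E)
    (p : T → T') (N : ℕ) (μ : ℝ) (ρ : Fin (N+2) → T' → ℝ) (F : Fin (N+1) → E → ℝ) : EReal :=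
  (Benergy M p N ρ F : EReal) + (μ : EReal) * Jbar M p N ρ

/-- Connectivity of the graph of cells induced by the internal edges. -/
def MeshConnected (M : Mesh T E) : Prop :=
  ∀ K L : T, Relation.ReflTransGen
    (fun a b => ∃ σ, (M.e1 σ = a ∧ M.e2 σ = b) ∨ (M.e1 σ = b ∧ M.e2 σ = a)) K L

end OTFV

open OTFV


section EHelp

lemma ereal_coe_sum {ι} (s : Finset ι) (f : ι → ℝ) :
    ((∑ i ∈ s, f i : ℝ) : EReal) = ∑ i ∈ s, (f i : EReal) := by
  induction s using Finset.cons_induction with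
  | empty => simp
  | cons i s hi ih => rw [Finset.sum_cons, Finset.sum_cons, EReal.coe_add, ih]

lemma ereal_sum_ne_bot {ι} (s : Finset ι) (f : ι → EReal) (h : ∀ i ∈ s, f i ≠ ⊥) :
    ∑ i ∈ s, f i ≠ ⊥ := by
  induction s using Finset.cons_induction with
  | empty => simp
  | cons i s hi ih =>
      rw [Finset.sum_cons]
      simp only [ne_eq, EReal.add_eq_bot_iff, not_or]
      exact ⟨h i (by simp), ih fun j hj => h j (by simp [hj])⟩

lemma ereal_sum_eq_top {ι} [DecidableEq ι] (s : Finset ι) (f : ι → EReal) (h : ∀ i ∈ s, f i ≠ ⊥)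
    {i} (hi : i ∈ s) (htop : f i = ⊤) : ∑ j ∈ s, f j = ⊤ := by
  rw [← Finset.add_sum_erase s f hi, htop]
  exact EReal.top_add_of_ne_bot
    (ereal_sum_ne_bot _ _ fun j hj => h j (Finset.mem_of_mem_erase hj))

lemma ereal_coe_mul_ne_bot (r : ℝ) (hr : 0 < r) {x : EReal} (hx : x ≠ ⊥) :
    (r : EReal) * x ≠ ⊥ := by
  induction x with
  | bot => exact absurd rfl hx
  | coe y => rw [← EReal.coe_mul]; exact EReal.coe_ne_bot _
  | top => rw [EReal.coe_mul_top_of_pos hr]; simp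

end EHelp

section JHelp
open OTFV

lemma jlog_mul_ne_bot (x m : ℝ) (hm : 0 ≤ m) : Jlog x * (m : EReal) ≠ ⊥ := by
  unfold Jlog; split_ifs with h
  · rw [← EReal.coe_mul]; exact EReal.coe_ne_bot _
  · rcases hm.eq_or_lt with h0 | h0
    · rw [← h0]; simp
    · rw [EReal.top_mul_of_pos (by exact_mod_cast h0)]; simp

lemma jlog_mul_coe (x m : ℝ) (h : 0 < x ∨ m = 0) :
    Jlog x * (m : EReal) = ((-Real.log x * m : ℝ) : EReal) := by
  rcases h with h | h
  · unfold Jlog; rw [if_pos h, ← EReal.coe_mul]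
  · subst h; simp

lemma jlog_mul_top (x m : ℝ) (hx : ¬ 0 < x) (hm : 0 < m) : Jlog x * (m : EReal) = ⊤ := by
  unfold Jlog; rw [if_neg hx, EReal.top_mul_of_pos (by exact_mod_cast hm)]

end JHelp

section BactHelp
open OTFV

lemma Bact_cases {p q : ℝ} (h : Bact p q ≠ ⊤) : 0 < p ∨ (p = 0 ∧ q = 0) := by
  unfold Bact at h; split_ifs at h with h1 h2
  exacts [Or.inl h1, Or.inr h2, absurd rfl h]

lemma sq_div_ineq {p₁ p₂ q₁ q₂ s t : ℝ} (hp₁ : 0 < p₁) (hp₂ : 0 < p₂)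
    (hs : 0 ≤ s) (ht : 0 ≤ t) (hst : 0 < s * p₁ + t * p₂) :
    (s * q₁ + t * q₂) ^ 2 / (2 * (s * p₁ + t * p₂)) ≤
      s * (q₁ ^ 2 / (2 * p₁)) + t * (q₂ ^ 2 / (2 * p₂)) := by
  have key : (s * q₁ + t * q₂) ^ 2 * (2 * p₁ * (2 * p₂)) ≤
      (s * q₁ ^ 2 * (2 * p₂) + t * q₂ ^ 2 * (2 * p₁)) * (2 * (s * p₁ + t * p₂)) := by
    nlinarith [mul_nonneg (mul_nonneg hs ht) (sq_nonneg (q₁ * p₂ - q₂ * p₁))]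
  have hrw : s * (q₁ ^ 2 / (2 * p₁)) + t * (q₂ ^ 2 / (2 * p₂)) =
      (s * q₁ ^ 2 * (2 * p₂) + t * q₂ ^ 2 * (2 * p₁)) / (2 * p₁ * (2 * p₂)) := by
    field_simp
    try ring
  rw [hrw, div_le_div_iff₀ (by positivity) (by positivity)]
  exact key

lemma Bact_convex {p₁ p₂ q₁ q₂ s t : ℝ} (hp₁ : 0 ≤ p₁) (hp₂ : 0 ≤ p₂)
    (hs : 0 < s) (ht : 0 < t) :
    Bact (s * p₁ + t * p₂) (s * q₁ + t * q₂) ≤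
      ENNReal.ofReal s * Bact p₁ q₁ + ENNReal.ofReal t * Bact p₂ q₂ := by
  have hsne : ENNReal.ofReal s ≠ 0 := by simp [ENNReal.ofReal_eq_zero, not_le, hs]
  have htne : ENNReal.ofReal t ≠ 0 := by simp [ENNReal.ofReal_eq_zero, not_le, ht]
  by_cases h₁ : Bact p₁ q₁ = ⊤
  · rw [h₁, ENNReal.mul_top hsne, top_add]; exact le_top
  by_cases h₂ : Bact p₂ q₂ = ⊤
  · rw [h₂, ENNReal.mul_top htne, add_top]; exact le_top
  rcases Bact_cases h₁ with hc₁ | hc₁ <;> rcases Bact_cases h₂ with hc₂ | hc₂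
  · -- both positive
    have hcomb : 0 < s * p₁ + t * p₂ := by positivity
    unfold Bact
    rw [if_pos hcomb, if_pos hc₁, if_pos hc₂,
      ← ENNReal.ofReal_mul hs.le, ← ENNReal.ofReal_mul ht.le,
      ← ENNReal.ofReal_add (by positivity) (by positivity)]
    exact ENNReal.ofReal_le_ofReal (sq_div_ineq hc₁ hc₂ hs.le ht.le hcomb)
  · -- p₁ > 0, p₂ = 0, q₂ = 0
    rcases hc₂ with ⟨hp, hq⟩; subst hp; subst hq
    simp only [mul_zero, add_zero]
    unfold Bact
    have h1 : 0 < s * p₁ := by positivity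
    rw [if_pos h1, if_pos hc₁, if_neg (lt_irrefl 0), if_pos ⟨rfl, rfl⟩, mul_zero, add_zero,
      ← ENNReal.ofReal_mul hs.le]
    exact ENNReal.ofReal_le_ofReal (le_of_eq (by field_simp))
  · -- p₁ = 0, q₁ = 0, p₂ > 0
    rcases hc₁ with ⟨hp, hq⟩; subst hp; subst hq
    simp only [mul_zero, zero_add]
    unfold Bact
    have h1 : 0 < t * p₂ := by positivity
    rw [if_pos h1, if_pos hc₂, if_neg (lt_irrefl 0), if_pos ⟨rfl, rfl⟩, mul_zero, zero_add,
      ← ENNReal.ofReal_mul ht.le]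
    exact ENNReal.ofReal_le_ofReal (le_of_eq (by field_simp))
  · rcases hc₁ with ⟨hp, hq⟩; subst hp; subst hq
    rcases hc₂ with ⟨hp, hq⟩; subst hp; subst hq
    simp only [mul_zero, add_zero]
    unfold Bact
    rw [if_neg (lt_irrefl 0), if_pos ⟨rfl, rfl⟩]
    exact zero_le

end BactHelp
section MeshHelp
open OTFV

variable {T T' E : Type*}

lemma linRec_nonneg (M : Mesh T E) (a : T → ℝ) (ha : ∀ K, 0 ≤ a K) (σ : E) :
    0 ≤ linRec M a σ :=
  add_nonneg (mul_nonneg (div_nonneg (M.d1_pos σ).le (M.dS_pos σ).le) (ha _))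
    (mul_nonneg (div_nonneg (M.d2_pos σ).le (M.dS_pos σ).le) (ha _))

lemma coarseM_nonneg [Fintype T] [DecidableEq T'] (M : Mesh T E) (p : T → T') (K' : T') :
    0 ≤ coarseM M p K' :=
  Finset.sum_nonneg fun K _ => (M.m_pos K).le

lemma divT_comb [Fintype E] [DecidableEq T] (M : Mesh T E) (F G : E → ℝ) (s t : ℝ) (K : T) :
    divT M (fun σ => s * F σ + t * G σ) K = s * divT M F K + t * divT M G K := by
  unfold divT
  rw [mul_div_assoc', mul_div_assoc', ← add_div]
  congr 1
  rw [Finset.mul_sum, Finset.mul_sum, ← Finset.sum_add_distrib]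
  exact Finset.sum_congr rfl fun σ _ => by split_ifs <;> ring

lemma benergy_nonneg_of_ne_top [Fintype E] [Fintype T'] (M : Mesh T E) (p : T → T') (N : ℕ)
    (ρ : Fin (N+2) → T' → ℝ) (F : Fin (N+1) → E → ℝ) (h : Benergy M p N ρ F ≠ ⊤) :
    ∀ k K', 0 ≤ ρ k K' := by
  by_contra hc
  exact h (by unfold Benergy; rw [if_neg hc])

lemma Benergy_convex [Fintype E] [Fintype T'] (M : Mesh T E) (p : T → T') (N : ℕ)
    (ρ₁ ρ₂ : Fin (N+2) → T' → ℝ) (F₁ F₂ : Fin (N+1) → E → ℝ) (s t : ℝ)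
    (hs : 0 < s) (ht : 0 < t)
    (h₁ : ∀ k K', 0 ≤ ρ₁ k K') (h₂ : ∀ k K', 0 ≤ ρ₂ k K') :
    Benergy M p N (fun k K' => s * ρ₁ k K' + t * ρ₂ k K')
      (fun k σ => s * F₁ k σ + t * F₂ k σ) ≤
      ENNReal.ofReal s * Benergy M p N ρ₁ F₁ + ENNReal.ofReal t * Benergy M p N ρ₂ F₂ := by
  unfold Benergy
  rw [if_pos fun k K' => add_nonneg (mul_nonneg hs.le (h₁ k K')) (mul_nonneg ht.le (h₂ k K')),
    if_pos h₁, if_pos h₂]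
  have hcomb : ∀ (k : Fin (N+1)) (σ : E),
      linRec M (inj p fun K' => ((s * ρ₁ k.succ K' + t * ρ₂ k.succ K') +
        (s * ρ₁ k.castSucc K' + t * ρ₂ k.castSucc K')) / 2) σ =
      s * linRec M (inj p fun K' => (ρ₁ k.succ K' + ρ₁ k.castSucc K') / 2) σ +
      t * linRec M (inj p fun K' => (ρ₂ k.succ K' + ρ₂ k.castSucc K') / 2) σ := by
    intro k σ; simp only [linRec, inj]; ring
  have hk : ∀ k : Fin (N+1),
      (∑ σ, Bact (linRec M (inj p fun K' => ((s * ρ₁ k.succ K' + t * ρ₂ k.succ K') +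
          (s * ρ₁ k.castSucc K' + t * ρ₂ k.castSucc K')) / 2) σ) (s * F₁ k σ + t * F₂ k σ) *
          ENNReal.ofReal (M.mS σ * M.dS σ)) ≤
      ENNReal.ofReal s * (∑ σ, Bact (linRec M (inj p fun K' =>
          (ρ₁ k.succ K' + ρ₁ k.castSucc K') / 2) σ) (F₁ k σ) * ENNReal.ofReal (M.mS σ * M.dS σ)) +
      ENNReal.ofReal t * (∑ σ, Bact (linRec M (inj p fun K' =>
          (ρ₂ k.succ K' + ρ₂ k.castSucc K') / 2) σ) (F₂ k σ) * ENNReal.ofReal (M.mS σ * M.dS σ)) := by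
    intro k
    calc _ ≤ ∑ σ, (ENNReal.ofReal s * Bact (linRec M (inj p fun K' =>
          (ρ₁ k.succ K' + ρ₁ k.castSucc K') / 2) σ) (F₁ k σ) +
          ENNReal.ofReal t * Bact (linRec M (inj p fun K' =>
          (ρ₂ k.succ K' + ρ₂ k.castSucc K') / 2) σ) (F₂ k σ)) * ENNReal.ofReal (M.mS σ * M.dS σ) := by
          refine Finset.sum_le_sum fun σ _ => mul_le_mul_left ?_ _
          rw [hcomb k σ]
          exact Bact_convex (linRec_nonneg M _ (fun K => by
              have := h₁ k.succ (p K); have := h₁ k.castSucc (p K)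
              simp only [inj]; positivity) σ)
            (linRec_nonneg M _ (fun K => by
              have := h₂ k.succ (p K); have := h₂ k.castSucc (p K)
              simp only [inj]; positivity) σ) hs ht
      _ = _ := by
          rw [Finset.mul_sum, Finset.mul_sum, ← Finset.sum_add_distrib]
          exact Finset.sum_congr rfl fun σ _ => by ring
  calc _ ≤ ∑ k : Fin (N+1), ENNReal.ofReal ((1:ℝ)/(N+1)) *
        (ENNReal.ofReal s * (∑ σ, Bact (linRec M (inj p fun K' =>
          (ρ₁ k.succ K' + ρ₁ k.castSucc K') / 2) σ) (F₁ k σ) * ENNReal.ofReal (M.mS σ * M.dS σ)) +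
        ENNReal.ofReal t * (∑ σ, Bact (linRec M (inj p fun K' =>
          (ρ₂ k.succ K' + ρ₂ k.castSucc K') / 2) σ) (F₂ k σ) * ENNReal.ofReal (M.mS σ * M.dS σ))) :=
        Finset.sum_le_sum fun k _ => mul_le_mul_right (hk k) _
    _ = _ := by
        rw [Finset.mul_sum, Finset.mul_sum, ← Finset.sum_add_distrib]
        exact Finset.sum_congr rfl fun k _ => by ring

end MeshHelp

set_option linter.unusedSectionVars false
section JbarHelp
open OTFV

variable {T T' E : Type*} [Fintype T] [Fintype T'] [Fintype E] [DecidableEq T']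

/-- Real-valued version of the barrier functional. -/
noncomputable def JbarR (M : Mesh T E) (p : T → T') (N : ℕ) (ρ : Fin (N+2) → T' → ℝ) : ℝ :=
  ∑ k : Fin N, ((1:ℝ)/(N+1)) *
    ∑ K', (- Real.log (ρ (k.succ.castSucc) K')) * coarseM M p K'

lemma Jbar_ne_bot (M : Mesh T E) (p : T → T') (N : ℕ) (ρ : Fin (N+2) → T' → ℝ) :
    Jbar M p N ρ ≠ ⊥ :=
  ereal_sum_ne_bot _ _ fun _ _ => ereal_coe_mul_ne_bot _ (by positivity)
    (ereal_sum_ne_bot _ _ fun K' _ => jlog_mul_ne_bot _ _ (coarseM_nonneg M p K'))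

lemma Jbar_pos (M : Mesh T E) (p : T → T') (N : ℕ) (ρ : Fin (N+2) → T' → ℝ)
    (h : Jbar M p N ρ ≠ ⊤) :
    ∀ (k : Fin N) (K' : T'), 0 < ρ k.succ.castSucc K' ∨ coarseM M p K' = 0 := by
  intro k K'
  by_contra hc; push_neg at hc
  obtain ⟨h1, h2⟩ := hc
  have hm : 0 < coarseM M p K' := (coarseM_nonneg M p K').lt_of_ne (Ne.symm h2)
  apply h
  unfold Jbar
  refine ereal_sum_eq_top _ _
    (fun j _ => ereal_coe_mul_ne_bot _ (by positivity)
      (ereal_sum_ne_bot _ _ fun L _ => jlog_mul_ne_bot _ _ (coarseM_nonneg M p L)))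
    (Finset.mem_univ k) ?_
  rw [ereal_sum_eq_top _ _ (fun L _ => jlog_mul_ne_bot _ _ (coarseM_nonneg M p L))
    (Finset.mem_univ K') (jlog_mul_top _ _ (not_lt.2 h1) hm)]
  exact EReal.coe_mul_top_of_pos (by positivity)

lemma Jbar_eq_coe (M : Mesh T E) (p : T → T') (N : ℕ) (ρ : Fin (N+2) → T' → ℝ)
    (h : ∀ (k : Fin N) (K' : T'), 0 < ρ k.succ.castSucc K' ∨ coarseM M p K' = 0) :
    Jbar M p N ρ = ((JbarR M p N ρ : ℝ) : EReal) := by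
  unfold Jbar JbarR
  rw [ereal_coe_sum]
  refine Finset.sum_congr rfl fun k _ => ?_
  rw [EReal.coe_mul, ereal_coe_sum]
  congr 1
  exact Finset.sum_congr rfl fun K' _ => jlog_mul_coe _ _ (h k K')

end JbarHelp

set_option maxHeartbeats 2000000 in
theorem barrier_suboptimality
    {T T' E : Type*} [Fintype T] [Fintype T'] [Fintype E] [DecidableEq T] [DecidableEq T']
    (M : Mesh T E) (p : T → T') (N : ℕ) (ρin ρf : T' → ℝ)
    (hin : ∀ K', 0 ≤ ρin K') (hf : ∀ K', 0 ≤ ρf K')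
    (hmass : ∑ K', ρin K' * coarseM M p K' = ∑ K', ρf K' * coarseM M p K')
    (xs : (Fin (N+2) → T' → ℝ) × (Fin (N+1) → E → ℝ))
    (hxs : xs ∈ Cset M p N ρin ρf)
    (hxsmin : ∀ y ∈ Cset M p N ρin ρf, Benergy M p N xs.1 xs.2 ≤ Benergy M p N y.1 y.2)
    (hxsfin : Benergy M p N xs.1 xs.2 ≠ ⊤)
    (μ : ℝ) (hμ : 0 < μ)
    (xμ : (Fin (N+2) → T' → ℝ) × (Fin (N+1) → E → ℝ))
    (hxμ : xμ ∈ Cset M p N ρin ρf)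
    (hxμmin : ∀ y ∈ Cset M p N ρin ρf, Pobj M p N μ xμ.1 xμ.2 ≤ Pobj M p N μ y.1 y.2)
    (hxμfin : Pobj M p N μ xμ.1 xμ.2 ≠ ⊤) :
    Benergy M p N xs.1 xs.2 ≤ Benergy M p N xμ.1 xμ.2 ∧
    Benergy M p N xμ.1 xμ.2 ≤ Benergy M p N xs.1 xs.2 +
      ENNReal.ofReal (μ * ((N : ℝ)/(N+1)) * ∑ K', coarseM M p K') := by
  obtain ⟨hBμne, hJμne⟩ : Benergy M p N xμ.1 xμ.2 ≠ ⊤ ∧ Jbar M p N xμ.1 ≠ ⊤ := by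
    constructor
    · intro h; apply hxμfin
      unfold Pobj; rw [h, EReal.coe_ennreal_top]
      exact EReal.top_add_of_ne_bot (ereal_coe_mul_ne_bot μ hμ (Jbar_ne_bot M p N xμ.1))
    · intro h; apply hxμfin
      unfold Pobj; rw [h, EReal.coe_mul_top_of_pos (by exact_mod_cast hμ)]
      exact EReal.add_top_of_ne_bot (EReal.coe_ennreal_ne_bot _)
  refine ⟨hxsmin xμ hxμ, ?_⟩
  set a := (Benergy M p N xs.1 xs.2).toReal with hadef
  set b := (Benergy M p N xμ.1 xμ.2).toReal with hbdef
  have hA : Benergy M p N xs.1 xs.2 = ENNReal.ofReal a := (ENNReal.ofReal_toReal hxsfin).symm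
  have hB : Benergy M p N xμ.1 xμ.2 = ENNReal.ofReal b := (ENNReal.ofReal_toReal hBμne).symm
  have ha : 0 ≤ a := ENNReal.toReal_nonneg
  have hb : 0 ≤ b := ENNReal.toReal_nonneg
  set Ω := ∑ K', coarseM M p K' with hΩdef
  have hΩ : 0 ≤ Ω := Finset.sum_nonneg fun K' _ => coarseM_nonneg M p K'
  set C := μ * ((N:ℝ) * ((1:ℝ)/(N+1)) * Ω) with hCdef
  have hC0 : 0 ≤ C := by positivity
  have hρμ0 : ∀ k K', 0 ≤ xμ.1 k K' := benergy_nonneg_of_ne_top M p N _ _ hBμne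
  have hρs0 : ∀ k K', 0 ≤ xs.1 k K' := benergy_nonneg_of_ne_top M p N _ _ hxsfin
  have hρμpos := Jbar_pos M p N xμ.1 hJμne
  have key : ∀ t : ℝ, 0 < t → t < 1 → b - a ≤ C / t := by
    intro t ht0 ht1
    set s := 1 - t with hsdef
    have hs0 : 0 < s := by rw [hsdef]; linarith
    set ρc : Fin (N+2) → T' → ℝ := fun k K' => s * xs.1 k K' + t * xμ.1 k K' with hρcdef
    set Fc : Fin (N+1) → E → ℝ := fun k σ => s * xs.2 k σ + t * xμ.2 k σ with hFcdef
    obtain ⟨h0s, hfs, hcs⟩ := hxs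
    obtain ⟨h0μ, hfμ, hcμ⟩ := hxμ
    have hmem : (ρc, Fc) ∈ Cset M p N ρin ρf := by
      refine ⟨?_, ?_, ?_⟩
      · funext K'
        show s * xs.1 0 K' + t * xμ.1 0 K' = ρin K'
        rw [h0s, h0μ, hsdef]; ring
      · funext K'
        show s * xs.1 (Fin.last (N+1)) K' + t * xμ.1 (Fin.last (N+1)) K' = ρf K'
        rw [hfs, hfμ, hsdef]; ring
      · intro k K
        have e1 := hcs k K
        have e2 := hcμ k K
        show (ρc k.succ (p K) - ρc k.castSucc (p K)) / ((1:ℝ)/(N+1)) +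
          divT M (fun σ => s * xs.2 k σ + t * xμ.2 k σ) K = 0
        rw [divT_comb]
        simp only [hρcdef]
        have hst : s + t = 1 := by rw [hsdef]; ring
        field_simp at e1 e2 ⊢
        nlinarith [e1, e2, hst]
    have hBcomb := Benergy_convex M p N xs.1 xμ.1 xs.2 xμ.2 s t hs0 ht0 hρs0 hρμ0
    have hBc : Benergy M p N ρc Fc ≤ ENNReal.ofReal (s * a + t * b) := by
      refine le_trans hBcomb ?_
      rw [hA, hB, ← ENNReal.ofReal_mul hs0.le, ← ENNReal.ofReal_mul ht0.le,
        ← ENNReal.ofReal_add (by positivity) (by positivity)]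
    have hρcpos : ∀ (k : Fin N) (K' : T'), 0 < ρc k.succ.castSucc K' ∨ coarseM M p K' = 0 := by
      intro k K'
      rcases hρμpos k K' with h | h
      · left
        show 0 < s * xs.1 k.succ.castSucc K' + t * xμ.1 k.succ.castSucc K'
        nlinarith [hρs0 k.succ.castSucc K']
      · exact Or.inr h
    have hJbarμ : Jbar M p N xμ.1 = ((JbarR M p N xμ.1 : ℝ) : EReal) :=
      Jbar_eq_coe M p N xμ.1 hρμpos
    have hJbarc : Jbar M p N ρc = ((JbarR M p N ρc : ℝ) : EReal) :=
      Jbar_eq_coe M p N ρc hρcpos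
    have hJtle : JbarR M p N ρc ≤ JbarR M p N xμ.1 +
        (N:ℝ) * (((1:ℝ)/(N+1)) * ((-Real.log t) * Ω)) := by
      unfold JbarR
      have hterm : ∀ k : Fin N,
          ((1:ℝ)/(N+1)) * ∑ K', (-Real.log (ρc k.succ.castSucc K')) * coarseM M p K' ≤
          ((1:ℝ)/(N+1)) * ∑ K', (-Real.log (xμ.1 k.succ.castSucc K')) * coarseM M p K' +
          ((1:ℝ)/(N+1)) * ((-Real.log t) * Ω) := by
        intro k
        rw [← mul_add]
        refine mul_le_mul_of_nonneg_left ?_ (by positivity)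
        rw [hΩdef, Finset.mul_sum, ← Finset.sum_add_distrib]
        refine Finset.sum_le_sum fun K' _ => ?_
        rcases hρμpos k K' with hpos | hzero
        · have hm := coarseM_nonneg M p K'
          have hρc_ge : t * xμ.1 k.succ.castSucc K' ≤ ρc k.succ.castSucc K' := by
            show t * xμ.1 k.succ.castSucc K' ≤ s * xs.1 k.succ.castSucc K' + t * xμ.1 k.succ.castSucc K'
            nlinarith [hρs0 k.succ.castSucc K']
          have hlog : Real.log (t * xμ.1 k.succ.castSucc K') ≤ Real.log (ρc k.succ.castSucc K') :=
            Real.log_le_log (mul_pos ht0 hpos) hρc_ge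
          rw [Real.log_mul ht0.ne' hpos.ne'] at hlog
          nlinarith [mul_le_mul_of_nonneg_right (neg_le_neg hlog) hm]
        · rw [hzero]; simp
      refine le_trans (Finset.sum_le_sum fun k _ => hterm k) ?_
      rw [Finset.sum_add_distrib, Finset.sum_const, Finset.card_univ, Fintype.card_fin,
        nsmul_eq_mul]
    have hopt := hxμmin (ρc, Fc) hmem
    have hlhs : Pobj M p N μ xμ.1 xμ.2 = ((b + μ * JbarR M p N xμ.1 : ℝ) : EReal) := by
      unfold Pobj
      rw [hB, hJbarμ, ← EReal.coe_mul, EReal.coe_ennreal_ofReal, max_eq_left hb, ← EReal.coe_add]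
    have hrhs : Pobj M p N μ ρc Fc ≤ (((s * a + t * b) + μ * JbarR M p N ρc : ℝ) : EReal) := by
      unfold Pobj
      rw [hJbarc, ← EReal.coe_mul, EReal.coe_add]
      refine add_le_add ?_ le_rfl
      calc (Benergy M p N ρc Fc : EReal) ≤ ((ENNReal.ofReal (s * a + t * b) : ℝ≥0∞) : EReal) :=
            EReal.coe_ennreal_le_coe_ennreal_iff.2 hBc
        _ = ((s * a + t * b : ℝ) : EReal) := by
            rw [EReal.coe_ennreal_ofReal, max_eq_left (by positivity)]
    have hreal : b + μ * JbarR M p N xμ.1 ≤ (s * a + t * b) + μ * JbarR M p N ρc := by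
      have := le_trans (hlhs ▸ hopt) hrhs
      exact_mod_cast this
    have h1 : (1 - t) * (b - a) ≤ C * (-Real.log t) := by
      have h2 : μ * JbarR M p N ρc ≤ μ * JbarR M p N xμ.1 +
          μ * ((N:ℝ) * (((1:ℝ)/(N+1)) * ((-Real.log t) * Ω))) := by
        have := mul_le_mul_of_nonneg_left hJtle hμ.le
        rw [mul_add] at this; exact this
      have hCrw : C * (-Real.log t) = μ * ((N:ℝ) * (((1:ℝ)/(N+1)) * ((-Real.log t) * Ω))) := by
        rw [hCdef]; ring
      have hs' : s = 1 - t := hsdef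
      rw [hs'] at hreal
      rw [hCrw]
      nlinarith [hreal, h2]
    have h2 : -Real.log t ≤ 1/t - 1 := by
      have := Real.log_le_sub_one_of_pos (inv_pos.2 ht0)
      rw [Real.log_inv] at this
      rw [one_div]; linarith
    have h3 : C * (-Real.log t) ≤ C * (1/t - 1) := mul_le_mul_of_nonneg_left h2 hC0
    rw [le_div_iff₀ ht0]
    have h4 : C * (1/t - 1) * t = C * (1 - t) := by
      have hinv : (1/t) * t = 1 := one_div_mul_cancel ht0.ne'
      linear_combination C * hinv
    have h5 : (1 - t) * ((b - a) * t) ≤ (1 - t) * C := by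
      nlinarith [mul_le_mul_of_nonneg_right h1 ht0.le, mul_le_mul_of_nonneg_right h3 ht0.le]
    exact le_of_mul_le_mul_left h5 (by linarith)
  have hfinal : b ≤ a + C := by
    by_contra hcon; push_neg at hcon
    set ε := b - a - C with hεdef
    have hε0 : 0 < ε := by rw [hεdef]; linarith
    set t := (C + ε/2)/(C + ε) with htdef
    have htpos : 0 < t := by rw [htdef]; positivity
    have htlt : t < 1 := by rw [htdef, div_lt_one (by positivity)]; linarith
    have h := key t htpos htlt
    have hct : C / t = C * (C + ε) / (C + ε/2) := by
      rw [htdef, div_div_eq_mul_div]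
    have : C * (C + ε) / (C + ε/2) < C + ε := by
      rw [div_lt_iff₀ (by positivity)]; nlinarith
    rw [hct] at h
    linarith
  rw [hA, hB, ← ENNReal.ofReal_add ha (by positivity)]
  apply ENNReal.ofReal_le_ofReal
  have hCeq : μ * ((N : ℝ)/(N+1)) * Ω = C := by rw [hCdef]; ring
  rw [hCeq]
  exact hfinal
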